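/- Let μ ∈ (-1,0), p = -μ/(1+μ) and q = (2+μ)/(1+μ). Then p > 0 and the quantity G(x,h) = -x(1+μ)h^p (1 + x + xμ + (1+μ)h) / (2 + (1+μ)h)^q is a first integral of the ODE h(2+(1+μ)h)(1+2x(1+μ)+(1+μ)h) + x(-1 + x²(1+μ)² + 2(x + 1/(1+μ) + h) - (1+x+h+μ(x+h))²) h' = 0, i.e., dG/dx vanishes along any C¹ solution h(x) with h(x) > 0 and 2 + (1+μ)h(x) > 0 on an interval where x ≠ 0. -/

import Mathlib

noncomputable section

/-- `G(x,h) = -x(1+μ) h^p (1 + x + xμ + (1+μ)h) / (2 + (1+μ)h)^q`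
with `p = -μ/(1+μ)` and `q = (2+μ)/(1+μ)` (real powers). -/
def Gint (μ x h : ℝ) : ℝ :=
  -x * (1 + μ) * h ^ (-μ / (1 + μ)) * (1 + x + x * μ + (1 + μ) * h) /
    (2 + (1 + μ) * h) ^ ((2 + μ) / (1 + μ))

/-- The purely algebraic core: the numerator of the derivative of `G` along a
solution is `-(1+μ)·(U/u)·(W/w)` times the left-hand side of the ODE. -/
lemma first_integral_aux (μ x u h' U W : ℝ) (ha : (1:ℝ) + μ ≠ 0) (hu : u ≠ 0)
    (hw : 2 + (1 + μ) * u ≠ 0)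
    (hode : u * (2 + (1 + μ) * u) * (1 + 2 * x * (1 + μ) + (1 + μ) * u) +
      x * (-1 + x ^ 2 * (1 + μ) ^ 2 + 2 * (x + 1 / (1 + μ) + u) -
        (1 + x + u + μ * (x + u)) ^ 2) * h' = 0) :
    ((-(1 + μ) * U + -x * (1 + μ) * (h' * (-μ / (1 + μ)) * (U / u))) *
          (1 + x + x * μ + (1 + μ) * u) +
        -x * (1 + μ) * U * (1 + μ + (1 + μ) * h')) * W -
      -x * (1 + μ) * U * (1 + x + x * μ + (1 + μ) * u) *
        ((1 + μ) * h' * ((2 + μ) / (1 + μ)) * (W / (2 + (1 + μ) * u))) = 0 := by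
  have expand : ((-(1 + μ) * U + -x * (1 + μ) * (h' * (-μ / (1 + μ)) * (U / u))) *
          (1 + x + x * μ + (1 + μ) * u) +
        -x * (1 + μ) * U * (1 + μ + (1 + μ) * h')) * W -
      -x * (1 + μ) * U * (1 + x + x * μ + (1 + μ) * u) *
        ((1 + μ) * h' * ((2 + μ) / (1 + μ)) * (W / (2 + (1 + μ) * u)))
      = (-(U * W * (1 + μ) / (u * (2 + (1 + μ) * u)))) *
        (u * (2 + (1 + μ) * u) * (1 + 2 * x * (1 + μ) + (1 + μ) * u) +
          x * (-1 + x ^ 2 * (1 + μ) ^ 2 + 2 * (x + 1 / (1 + μ) + u) -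
            (1 + x + u + μ * (x + u)) ^ 2) * h') := by
    field_simp
    ring
  rw [expand, hode, mul_zero]

/-- For `μ ∈ (-1,0)`, `p = -μ/(1+μ) > 0`, and `G` is a first integral of the ODE
`h(2+(1+μ)h)(1+2x(1+μ)+(1+μ)h)
  + x(-1 + x²(1+μ)² + 2(x + 1/(1+μ) + h) - (1+x+h+μ(x+h))²) h' = 0`:
along any C¹ solution `h` with `h(x) > 0`, `2 + (1+μ)h(x) > 0` and `x ≠ 0`,
the derivative of `x ↦ G(x, h(x))` vanishes. -/
theorem first_integral (μ : ℝ) (hμ₁ : -1 < μ) (hμ₂ : μ < 0) :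
    0 < -μ / (1 + μ) ∧
    ∀ (h : ℝ → ℝ) (x h'x : ℝ), x ≠ 0 → 0 < h x → 0 < 2 + (1 + μ) * h x →
      HasDerivAt h h'x x →
      h x * (2 + (1 + μ) * h x) * (1 + 2 * x * (1 + μ) + (1 + μ) * h x) +
        x * (-1 + x ^ 2 * (1 + μ) ^ 2 + 2 * (x + 1 / (1 + μ) + h x) -
          (1 + x + h x + μ * (x + h x)) ^ 2) * h'x = 0 →
      HasDerivAt (fun t => Gint μ t (h t)) 0 x := by
  have ha : (0:ℝ) < 1 + μ := by linarith
  have ha' : (1:ℝ) + μ ≠ 0 := ha.ne'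
  refine ⟨div_pos (by linarith) ha, ?_⟩
  intro h x h'x hx hu hw hder hode
  have hP : HasDerivAt (fun t => (h t) ^ (-μ / (1 + μ)))
      (h'x * (-μ / (1 + μ)) * (h x) ^ (-μ / (1 + μ) - 1)) x :=
    hder.rpow_const (Or.inl hu.ne')
  have hWin : HasDerivAt (fun t => 2 + (1 + μ) * h t) ((1 + μ) * h'x) x := by
    simpa using (hder.const_mul (1 + μ)).const_add 2
  have hW : HasDerivAt (fun t => (2 + (1 + μ) * h t) ^ ((2 + μ) / (1 + μ)))
      ((1 + μ) * h'x * ((2 + μ) / (1 + μ)) * (2 + (1 + μ) * h x) ^ ((2 + μ) / (1 + μ) - 1)) x :=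
    hWin.rpow_const (Or.inl hw.ne')
  have hL : HasDerivAt (fun t : ℝ => -t * (1 + μ)) (-(1 + μ)) x := by
    simpa using ((hasDerivAt_id x).neg.mul_const (1 + μ))
  have hN2 : HasDerivAt (fun t => -t * (1 + μ) * (h t) ^ (-μ / (1 + μ)))
      (-(1 + μ) * (h x) ^ (-μ / (1 + μ)) +
        -x * (1 + μ) * (h'x * (-μ / (1 + μ)) * (h x) ^ (-μ / (1 + μ) - 1))) x := hL.mul hP
  have hS : HasDerivAt (fun t => 1 + t + t * μ + (1 + μ) * h t)
      (1 + μ + (1 + μ) * h'x) x := by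
    have h1 : HasDerivAt (fun t : ℝ => 1 + t + t * μ + (1 + μ) * h t)
        ((0 + 1 + (1 * μ + x * 0)) + (1 + μ) * h'x) x :=
      (((hasDerivAt_const x 1).add (hasDerivAt_id x)).add
        ((hasDerivAt_id x).mul (hasDerivAt_const x μ))).add (hder.const_mul (1 + μ))
    convert h1 using 1; ring
  have hN := hN2.mul hS
  have hwq : (0:ℝ) < (2 + (1 + μ) * h x) ^ ((2 + μ) / (1 + μ)) :=
    Real.rpow_pos_of_pos hw _
  simp only [Gint]
  refine (hN.div hW hwq.ne').congr_deriv (Eq.symm ?_)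
  rw [eq_comm, div_eq_zero_iff]
  left
  have hup1 : (h x) ^ (-μ / (1 + μ) - 1) = (h x) ^ (-μ / (1 + μ)) / h x := by
    rw [Real.rpow_sub hu, Real.rpow_one]
  have hwq1 : (2 + (1 + μ) * h x) ^ ((2 + μ) / (1 + μ) - 1)
      = (2 + (1 + μ) * h x) ^ ((2 + μ) / (1 + μ)) / (2 + (1 + μ) * h x) := by
    rw [Real.rpow_sub hw, Real.rpow_one]
  rw [hup1, hwq1]
  exact first_integral_aux μ x (h x) h'x ((h x) ^ (-μ / (1 + μ)))
    ((2 + (1 + μ) * h x) ^ ((2 + μ) / (1 + μ))) ha' hu.ne' hw.ne' hode
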